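/- Let 𝒫: [0,∞) → [0,1] be nonincreasing with 𝒫(2ρ) ≤ 2(𝒫(ρ))^2 for all ρ ≥ r, and suppose 𝒫(r) = 1/4. Then for every ε < (ln 2)/(2r), the Lebesgue–Stieltjes integral −∫_0^∞ e^{ερ} d𝒫(ρ) is finite. -/

import Mathlib

open MeasureTheory Real

/-- if the survival function Ps(ρ) = P(U > ρ) of a nonnegative random
variable U satisfies the doubling inequality Ps(2ρ) ≤ 2Ps(ρ)² for ρ ≥ r and Ps(r) = 1/4,
then E exp(εU) < ∞ (i.e. −∫_0^∞ e^{ερ} dPs(ρ) < ∞) for every ε < ln 2/(2r). -/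
theorem exp_integrable_of_tail_doubling
    {Ω : Type*} [MeasurableSpace Ω] (P : Measure Ω) [IsProbabilityMeasure P]
    (U : Ω → ℝ) (hU : Measurable U) (hU0 : ∀ ω, 0 ≤ U ω)
    (Ps : ℝ → ℝ) (hPs : ∀ ρ, Ps ρ = (P {ω | ρ < U ω}).toReal)
    (r : ℝ) (hr : 0 < r)
    (hdbl : ∀ ρ, r ≤ ρ → Ps (2 * ρ) ≤ 2 * (Ps ρ) ^ 2)
    (hPr : Ps r = 1 / 4)
    (ε : ℝ) (hε : ε < Real.log 2 / (2 * r)) :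
    Integrable (fun ω => Real.exp (ε * U ω)) P := by
  have hmeas : Measurable fun ω => Real.exp (ε * U ω) :=
    (measurable_exp.comp (hU.const_mul ε))
  rcases le_or_gt ε 0 with hε0 | hε0
  · refine Integrable.mono' (integrable_const 1) hmeas.aestronglyMeasurable ?_
    filter_upwards with ω
    rw [Real.norm_of_nonneg (Real.exp_pos _).le]
    exact Real.exp_le_one_iff.mpr (mul_nonpos_of_nonpos_of_nonneg hε0 (hU0 ω))
  -- main case ε > 0
  set c : ℝ := Real.log 2 / (2 * r) with hc_def
  have hlog2 : (0:ℝ) < Real.log 2 := Real.log_pos one_lt_two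
  have hc : 0 < c := div_pos hlog2 (by linarith)
  -- monotonicity of Ps
  have hmono : ∀ {a b : ℝ}, a ≤ b → Ps b ≤ Ps a := by
    intro a b hab
    rw [hPs, hPs]
    refine ENNReal.toReal_mono (measure_ne_top P _) (measure_mono ?_)
    intro ω hω; exact lt_of_le_of_lt hab hω
  have hPs_nonneg : ∀ ρ, 0 ≤ Ps ρ := fun ρ => (hPs ρ) ▸ ENNReal.toReal_nonneg
  -- dyadic bound
  have key : ∀ n : ℕ, Ps (2 ^ n * r) ≤ (1/2) * (1/2) ^ (2 ^ n : ℕ) := by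
    intro n
    induction n with
    | zero => norm_num [hPr]
    | succ n ih =>
      have h1 : r ≤ 2 ^ n * r := le_mul_of_one_le_left hr.le (one_le_pow₀ (by norm_num))
      have harg : (2:ℝ) ^ (n+1) * r = 2 * (2 ^ n * r) := by ring
      calc Ps (2 ^ (n+1) * r) = Ps (2 * (2 ^ n * r)) := by rw [harg]
        _ ≤ 2 * Ps (2 ^ n * r) ^ 2 := hdbl _ h1
        _ ≤ 2 * ((1/2) * (1/2) ^ (2 ^ n : ℕ)) ^ 2 := by
            nlinarith [hPs_nonneg (2 ^ n * r), ih]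
        _ = (1/2) * (1/2) ^ (2 ^ (n+1) : ℕ) := by
            have h2 : (2:ℕ) ^ (n+1) = 2 ^ n * 2 := pow_succ 2 n
            rw [h2, pow_mul]; ring
  -- exponential tail bound
  have tail : ∀ ρ, r ≤ ρ → Ps ρ ≤ Real.exp (-(c * ρ)) := by
    intro ρ hρ
    have hρ0 : 0 < ρ := lt_of_lt_of_le hr hρ
    have hx1 : 1 ≤ ρ / r := (one_le_div hr).mpr hρ
    have hx0 : 0 < ρ / r := by linarith
    set n : ℕ := ⌊Real.logb 2 (ρ / r)⌋₊ with hn_def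
    have hlb0 : 0 ≤ Real.logb 2 (ρ / r) := Real.logb_nonneg one_lt_two hx1
    have hn1 : (n : ℝ) ≤ Real.logb 2 (ρ / r) := Nat.floor_le hlb0
    have hn2 : Real.logb 2 (ρ / r) < n + 1 := Nat.lt_floor_add_one _
    have hrpow : (2:ℝ) ^ (Real.logb 2 (ρ / r)) = ρ / r :=
      Real.rpow_logb two_pos (by norm_num) hx0
    have h2n : (2:ℝ) ^ (n:ℕ) ≤ ρ / r := by
      calc (2:ℝ) ^ (n:ℕ) = (2:ℝ) ^ ((n:ℝ)) := (Real.rpow_natCast 2 n).symm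
        _ ≤ (2:ℝ) ^ (Real.logb 2 (ρ / r)) :=
            Real.rpow_le_rpow_of_exponent_le one_le_two hn1
        _ = ρ / r := hrpow
    have h2n' : ρ / r < (2:ℝ) ^ (n+1 : ℕ) := by
      calc ρ / r = (2:ℝ) ^ (Real.logb 2 (ρ / r)) := hrpow.symm
        _ < (2:ℝ) ^ ((n:ℝ) + 1) := by
            exact Real.rpow_lt_rpow_of_exponent_lt one_lt_two hn2
        _ = (2:ℝ) ^ (n+1 : ℕ) := by
            rw [← Real.rpow_natCast 2 (n+1)]; push_cast; ring_nf
    have hle : (2:ℝ) ^ (n:ℕ) * r ≤ ρ := by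
      rw [← le_div_iff₀ hr] at *; exact h2n
    have hhalf : ρ / (2 * r) ≤ ((2:ℕ) ^ n : ℕ) := by
      have : ρ < 2 ^ (n+1:ℕ) * r := (div_lt_iff₀ hr).mp h2n'
      have h2 : (2:ℝ) ^ (n+1:ℕ) = 2 * 2 ^ n := by rw [pow_succ]; ring
      push_cast
      rw [div_le_iff₀ (by linarith : (0:ℝ) < 2 * r)]
      nlinarith
    have hstep1 : Ps ρ ≤ (1/2) * (1/2) ^ (2 ^ n : ℕ) := le_trans (hmono hle) (key n)
    have hstep2 : ((1:ℝ)/2) * (1/2) ^ (2 ^ n : ℕ) ≤ (1/2) ^ (2 ^ n : ℕ) := by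
      have : (0:ℝ) ≤ (1/2) ^ (2 ^ n : ℕ) := by positivity
      linarith
    refine le_trans (le_trans hstep1 hstep2) ?_
    have hpos : (0:ℝ) < (1/2 : ℝ) ^ (2 ^ n : ℕ) := by positivity
    rw [← Real.exp_log hpos]
    apply Real.exp_le_exp.mpr
    rw [Real.log_pow]
    have hlh : Real.log (1/2 : ℝ) = - Real.log 2 := by
      rw [one_div, Real.log_inv]
    rw [hlh]
    have hcρ : c * ρ = Real.log 2 * (ρ / (2 * r)) := by
      rw [hc_def]; field_simp
    have hmm : Real.log 2 * (ρ / (2 * r)) ≤ Real.log 2 * ((2:ℕ) ^ n : ℕ) :=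
      mul_le_mul_of_nonneg_left hhalf hlog2.le
    rw [hcρ]
    push_cast at hmm ⊢
    nlinarith
  -- now the layer cake argument
  set f : Ω → ℝ := fun ω => Real.exp (ε * U ω) with hf_def
  refine ⟨hmeas.aestronglyMeasurable, ?_⟩
  rw [hasFiniteIntegral_iff_ofReal (Filter.Eventually.of_forall fun ω => (Real.exp_pos _).le)]
  rw [lintegral_eq_lintegral_meas_lt P
    (Filter.Eventually.of_forall fun ω => (Real.exp_pos _).le) hmeas.aemeasurable]
  set T : ℝ := Real.exp (ε * r) with hT_def
  have hT0 : 0 < T := Real.exp_pos _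
  set p : ℝ := c / ε with hp_def
  have hp1 : 1 < p := (one_lt_div hε0).mpr hε
  have hsplit : Set.Ioi (0:ℝ) = Set.Ioc 0 T ∪ Set.Ioi T := (Set.Ioc_union_Ioi_eq_Ioi hT0.le).symm
  rw [hsplit, lintegral_union measurableSet_Ioi (Set.Ioc_disjoint_Ioi le_rfl)]
  have hpart1 : ∫⁻ t in Set.Ioc (0:ℝ) T, P {a | t < f a} < ⊤ := by
    calc ∫⁻ t in Set.Ioc (0:ℝ) T, P {a | t < f a}
        ≤ ∫⁻ _ in Set.Ioc (0:ℝ) T, 1 := lintegral_mono fun t => prob_le_one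
      _ = ENNReal.ofReal T := by
          rw [setLIntegral_const, one_mul, Real.volume_Ioc, sub_zero]
      _ < ⊤ := ENNReal.ofReal_lt_top
  have hpart2 : ∫⁻ t in Set.Ioi T, P {a | t < f a} < ⊤ := by
    have hbd : ∀ t ∈ Set.Ioi T, P {a | t < f a} ≤ ENNReal.ofReal (t ^ (-p)) := by
      intro t ht
      have htT : T < t := ht
      have ht0 : 0 < t := lt_trans hT0 htT
      have hρr : r < Real.log t / ε := by
        have : ε * r < Real.log t := by
          have := Real.log_lt_log hT0 htT
          rwa [hT_def, Real.log_exp] at this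
        rw [lt_div_iff₀ hε0]; linarith [this]
      have hset : {a | t < f a} = {ω | Real.log t / ε < U ω} := by
        ext ω
        simp only [Set.mem_setOf_eq, hf_def]
        rw [div_lt_iff₀ hε0, Real.log_lt_iff_lt_exp ht0, mul_comm]
      rw [hset, ← ENNReal.ofReal_toReal (measure_ne_top P {ω | Real.log t / ε < U ω}),
        ← hPs (Real.log t / ε)]
      refine ENNReal.ofReal_le_ofReal ?_
      refine le_trans (tail _ hρr.le) ?_
      rw [Real.rpow_def_of_pos ht0]
      apply Real.exp_le_exp.mpr
      apply le_of_eq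
      rw [hp_def]
      ring
    calc ∫⁻ t in Set.Ioi T, P {a | t < f a}
        ≤ ∫⁻ t in Set.Ioi T, ENNReal.ofReal (t ^ (-p)) :=
          setLIntegral_mono' measurableSet_Ioi hbd
      _ ≤ ∫⁻ t in Set.Ioi T, (‖t ^ (-p)‖₊ : ENNReal) :=
          lintegral_mono fun t => Real.ofReal_le_enorm _
      _ < ⊤ := (integrableOn_Ioi_rpow_of_lt (by linarith : -p < -1) hT0).2
  exact ENNReal.add_lt_top.mpr ⟨hpart1, hpart2⟩
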